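/- Let G be symmetric positive definite, a* a nonzero integer minimizer of aᵀGa, and j an index such that a* is not supported only on {j}. Define b by b_j = round(r_j) (nearest integer to r_j := −(Σ_{i≠j} G_{ji} a*_i)/G_{jj}) and b_i = a*_i for i ≠ j. Then b ≠ 0 and bᵀGb ≤ a*ᵀGa*, hence bᵀGb = a*ᵀGa*. -/

import Mathlib

open Matrix BigOperators

lemma round_nearest (r : ℝ) (m : ℤ) : |r - round r| ≤ |r - (m : ℝ)| := by
  rcases eq_or_ne m (round r) with h | h
  · rw [h]
  · have h1 : (1 : ℝ) ≤ |(m : ℝ) - (round r : ℝ)| := by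
      rw [← Int.cast_sub, ← Int.cast_abs]
      exact_mod_cast Int.one_le_abs (sub_ne_zero.mpr h)
    have h2 : |r - round r| ≤ 1 / 2 := abs_sub_round r
    have : |(m : ℝ) - (round r : ℝ)| ≤ |(m:ℝ) - r| + |r - round r| := by
      calc |(m : ℝ) - (round r : ℝ)| = |((m:ℝ) - r) + (r - round r)| := by ring_nf
        _ ≤ _ := abs_add_le _ _
    have := abs_sub_comm r (m:ℝ) ▸ this
    linarith

theorem stmt19 {n : ℕ} (G : Matrix (Fin n) (Fin n) ℝ) (hG : G.PosDef)
    (a : Fin n → ℤ) (ha : a ≠ 0)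
    (hmin : ∀ b : Fin n → ℤ, b ≠ 0 →
      (fun i => (a i : ℝ)) ⬝ᵥ G.mulVec (fun i => (a i : ℝ)) ≤
      (fun i => (b i : ℝ)) ⬝ᵥ G.mulVec (fun i => (b i : ℝ)))
    (j : Fin n) (hne : ∃ i, i ≠ j ∧ a i ≠ 0)
    (r : ℝ)
    (hr : r = -(∑ i ∈ Finset.univ.erase j, G j i * (a i : ℝ)) / G j j)
    (b : Fin n → ℤ) (hb : b = Function.update a j (round r)) :
    b ≠ 0 ∧
    (fun i => (b i : ℝ)) ⬝ᵥ G.mulVec (fun i => (b i : ℝ)) ≤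
      (fun i => (a i : ℝ)) ⬝ᵥ G.mulVec (fun i => (a i : ℝ)) ∧
    (fun i => (b i : ℝ)) ⬝ᵥ G.mulVec (fun i => (b i : ℝ)) =
      (fun i => (a i : ℝ)) ⬝ᵥ G.mulVec (fun i => (a i : ℝ)) := by
  obtain ⟨i0, hi0j, hi0⟩ := hne
  -- b ≠ 0
  have hbne : b ≠ 0 := by
    intro h
    apply hi0
    have : b i0 = 0 := by rw [h]; rfl
    rwa [hb, Function.update_of_ne hi0j] at this
  -- diagonal entry positive
  have hGjj : 0 < G j j := by
    have := hG.dotProduct_mulVec_pos (x := Pi.single j 1) (by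
      intro h
      have := congrFun h j
      simp at this)
    simpa [dotProduct, Matrix.mulVec, Pi.single_apply, Finset.sum_ite_eq',
      Finset.mul_sum] using this
  -- symmetric
  have hsymm : ∀ i i', G i i' = G i' i := by
    intro i i'
    have := hG.1
    have h := congrFun (congrFun this i) i'
    simpa [Matrix.conjTranspose_apply] using h.symm
  -- w : the vector a with j-th entry zeroed
  set w : Fin n → ℝ := fun i => if i = j then 0 else (a i : ℝ) with hw
  set e : Fin n → ℝ := Pi.single j 1 with he
  have hvs : ∀ s : ℝ, (fun i => if i = j then s else (a i : ℝ)) = w + s • e := by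
    intro s
    funext i
    by_cases h : i = j <;> simp [hw, he, h, Pi.single_apply]
  -- key sum
  have hS : ∑ i ∈ Finset.univ.erase j, G j i * (a i : ℝ) = -r * G j j := by
    rw [hr]; field_simp
  have heGw : e ⬝ᵥ G.mulVec w = -r * G j j := by
    rw [← hS, he]
    have h1 : Pi.single j (1:ℝ) ⬝ᵥ G.mulVec w = (G.mulVec w) j := by
      simp [dotProduct, Pi.single_apply, Finset.sum_eq_single j, Finset.mem_univ]
    rw [h1]
    show ∑ i, G j i * w i = _
    rw [← Finset.sum_erase_add _ _ (Finset.mem_univ j)]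
    simp only [hw, if_pos rfl, mul_zero, add_zero]
    exact Finset.sum_congr rfl fun i hi => by
      rw [if_neg (Finset.mem_erase.mp hi).1]
  have hwGe : w ⬝ᵥ G.mulVec e = -r * G j j := by
    rw [← heGw]
    simp only [dotProduct, Matrix.mulVec, dotProduct, Finset.mul_sum,
      Finset.sum_mul]
    rw [Finset.sum_comm]
    apply Finset.sum_congr rfl; intro i _
    apply Finset.sum_congr rfl; intro i' _
    rw [hsymm i i']; ring
  have heGe : e ⬝ᵥ G.mulVec e = G j j := by
    simp only [he, dotProduct, Matrix.mulVec, dotProduct, Pi.single_apply,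
      mul_ite, mul_one, mul_zero, ite_mul, one_mul, zero_mul]
    rw [Finset.sum_eq_single j (fun i _ h => by simp [h]) (by simp),
      if_pos rfl, Finset.sum_eq_single j (fun i _ h => by simp [h]) (by simp), if_pos rfl]
  -- quadratic expansion
  have hQ : ∀ s : ℝ, (w + s • e) ⬝ᵥ G.mulVec (w + s • e)
      = w ⬝ᵥ G.mulVec w + G j j * ((s - r)^2 - r^2) := by
    intro s
    simp only [Matrix.mulVec_add, Matrix.mulVec_smul, add_dotProduct,
      smul_dotProduct, dotProduct_add, dotProduct_smul,
      smul_eq_mul, heGw, hwGe, heGe]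
    ring
  have hbv : (fun i => (b i : ℝ)) = w + (round r : ℝ) • e := by
    rw [← hvs]
    funext i
    by_cases h : i = j <;> simp [hb, h, Function.update_apply]
  have hav : (fun i => (a i : ℝ)) = w + ((a j : ℝ)) • e := by
    rw [← hvs]
    funext i
    by_cases h : i = j <;> simp [h]
  -- the inequality
  have hround : ((round r : ℝ) - r)^2 ≤ ((a j : ℝ) - r)^2 := by
    have h := round_nearest r (a j)
    rw [← sq_abs ((round r : ℝ) - r), ← sq_abs ((a j : ℝ) - r),
      abs_sub_comm ((round r : ℝ)) r, abs_sub_comm ((a j : ℝ)) r]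
    exact pow_le_pow_left₀ (abs_nonneg _) h 2
  have hle : (fun i => (b i : ℝ)) ⬝ᵥ G.mulVec (fun i => (b i : ℝ)) ≤
      (fun i => (a i : ℝ)) ⬝ᵥ G.mulVec (fun i => (a i : ℝ)) := by
    rw [hbv, hav, hQ, hQ]
    nlinarith [hGjj, hround]
  exact ⟨hbne, hle, le_antisymm hle (hmin b hbne)⟩
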